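/- Let E, H₁, H₂ be complex Hilbert spaces, let A ∈ B(E) be self-adjoint and invertible, and let B₁ ∈ B(H₁, E), C₁ ∈ B(E, H₁), C₂ ∈ B(E, H₂), D₁ ∈ B(H₁), D₂ ∈ B(H₂, H₁), D₃ ∈ B(H₂). Suppose the operator U on E ⊕ H₁ ⊕ H₂ defined by U(e, h₁, h₂) = (B₁ h₁, C₁ e + D₁ h₁ + D₂ h₂, C₂ e + D₃ h₂) is an isometry and that C₁*C₁ = A² and C₁ A⁻² C₁* D₂ = D₂. Then the operator U₁ on E ⊕ H₁ defined by U₁(e, h₁) = (B₁ h₁, C₁ A⁻¹ e + D₁ h₁) is an isometry. -/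

import Mathlib

open ContinuousLinearMap
open scoped ComplexInnerProductSpace

/-- The element `(x, y)` of the Hilbert-space direct sum `X ⊕ Y`,
modelled as `WithLp 2 (X × Y)`. -/
noncomputable def mk2 {X Y : Type*} (x : X) (y : Y) : WithLp 2 (X × Y) :=
  (WithLp.equiv 2 (X × Y)).symm (x, y)

/-- The element `(e, h₁, h₂)` of the Hilbert-space direct sum `E ⊕ H₁ ⊕ H₂`,
modelled as `WithLp 2 (E × WithLp 2 (H₁ × H₂))`. -/
noncomputable def mk3 {E H₁ H₂ : Type*} (e : E) (h₁ : H₁) (h₂ : H₂) :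
    WithLp 2 (E × WithLp 2 (H₁ × H₂)) :=
  (WithLp.equiv 2 _).symm (e, (WithLp.equiv 2 (H₁ × H₂)).symm (h₁, h₂))

/-- Let `A ∈ B(E)` be self-adjoint and invertible (with inverse `A'`).
If `U(e, h₁, h₂) = (B₁ h₁, C₁ e + D₁ h₁ + D₂ h₂, C₂ e + D₃ h₂)` is an isometry,
`C₁*C₁ = A²` and `C₁ A⁻² C₁* D₂ = D₂`, then `U₁(e, h₁) = (B₁ h₁, C₁ A⁻¹ e + D₁ h₁)`
is an isometry on `E ⊕ H₁`. -/
theorem statement4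
    {E H₁ H₂ : Type*}
    [NormedAddCommGroup E] [InnerProductSpace ℂ E] [CompleteSpace E]
    [NormedAddCommGroup H₁] [InnerProductSpace ℂ H₁] [CompleteSpace H₁]
    [NormedAddCommGroup H₂] [InnerProductSpace ℂ H₂] [CompleteSpace H₂]
    (A A' : E →L[ℂ] E) (hA : IsSelfAdjoint A)
    (hAA' : A ∘L A' = ContinuousLinearMap.id ℂ E)
    (hA'A : A' ∘L A = ContinuousLinearMap.id ℂ E)
    (B₁ : H₁ →L[ℂ] E) (C₁ : E →L[ℂ] H₁) (C₂ : E →L[ℂ] H₂)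
    (D₁ : H₁ →L[ℂ] H₁) (D₂ : H₂ →L[ℂ] H₁) (D₃ : H₂ →L[ℂ] H₂)
    (U : WithLp 2 (E × WithLp 2 (H₁ × H₂)) →L[ℂ] WithLp 2 (E × WithLp 2 (H₁ × H₂)))
    (hU : ∀ (e : E) (h₁ : H₁) (h₂ : H₂),
      U (mk3 e h₁ h₂) = mk3 (B₁ h₁) (C₁ e + D₁ h₁ + D₂ h₂) (C₂ e + D₃ h₂))
    (hIso : Isometry U)
    (hC₁ : adjoint C₁ ∘L C₁ = A ∘L A)
    (hD₂ : C₁ ∘L (A' ∘L A') ∘L adjoint C₁ ∘L D₂ = D₂)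
    (U₁ : WithLp 2 (E × H₁) →L[ℂ] WithLp 2 (E × H₁))
    (hU₁ : ∀ (e : E) (h₁ : H₁), U₁ (mk2 e h₁) = mk2 (B₁ h₁) (C₁ (A' e) + D₁ h₁)) :
    Isometry U₁ := by
  -- norm of mk3 / mk2
  have nmk3 : ∀ (e : E) (h₁ : H₁) (h₂ : H₂),
      ‖mk3 e h₁ h₂‖ ^ 2 = ‖e‖ ^ 2 + ‖h₁‖ ^ 2 + ‖h₂‖ ^ 2 := by
    intro e h₁ h₂
    rw [WithLp.prod_norm_sq_eq_of_L2]
    have : ‖(mk3 e h₁ h₂).snd‖ ^ 2 = ‖h₁‖ ^ 2 + ‖h₂‖ ^ 2 :=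
      WithLp.prod_norm_sq_eq_of_L2 _
    simp only [mk3, WithLp.equiv_symm_apply, WithLp.toLp_fst, WithLp.toLp_snd] at this ⊢
    rw [this]; ring
  have nmk2 : ∀ (e : E) (h₁ : H₁), ‖mk2 e h₁‖ ^ 2 = ‖e‖ ^ 2 + ‖h₁‖ ^ 2 := by
    intro e h₁
    rw [WithLp.prod_norm_sq_eq_of_L2]
    simp [mk2]
  have key : ∀ (e : E) (h₁ : H₁) (h₂ : H₂),
      ‖B₁ h₁‖ ^ 2 + ‖C₁ e + D₁ h₁ + D₂ h₂‖ ^ 2 + ‖C₂ e + D₃ h₂‖ ^ 2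
        = ‖e‖ ^ 2 + ‖h₁‖ ^ 2 + ‖h₂‖ ^ 2 := by
    intro e h₁ h₂
    have := hIso.norm_map_of_map_zero (map_zero U) (mk3 e h₁ h₂)
    rw [hU] at this
    calc ‖B₁ h₁‖ ^ 2 + ‖C₁ e + D₁ h₁ + D₂ h₂‖ ^ 2 + ‖C₂ e + D₃ h₂‖ ^ 2
        = ‖mk3 (B₁ h₁) (C₁ e + D₁ h₁ + D₂ h₂) (C₂ e + D₃ h₂)‖ ^ 2 := (nmk3 _ _ _).symm
      _ = ‖mk3 e h₁ h₂‖ ^ 2 := by rw [this]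
      _ = _ := nmk3 _ _ _
  -- ‖C₁ x‖ = ‖A x‖
  have hC : ∀ x : E, ‖C₁ x‖ = ‖A x‖ := by
    intro x
    have h1 : (inner ℂ (C₁ x) (C₁ x) : ℂ) = inner ℂ (A x) (A x) := by
      rw [← adjoint_inner_right C₁ x (C₁ x)]
      have h2 : adjoint C₁ (C₁ x) = A (A x) := by
        have := ContinuousLinearMap.ext_iff.mp hC₁ x
        simpa using this
      rw [h2, ← adjoint_inner_left, hA.adjoint_eq]
    rw [inner_self_eq_norm_sq_to_K, inner_self_eq_norm_sq_to_K] at h1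
    have h3 : ‖C₁ x‖ ^ 2 = ‖A x‖ ^ 2 := by exact_mod_cast h1
    calc ‖C₁ x‖ = √(‖C₁ x‖ ^ 2) := (Real.sqrt_sq (norm_nonneg _)).symm
      _ = √(‖A x‖ ^ 2) := by rw [h3]
      _ = ‖A x‖ := Real.sqrt_sq (norm_nonneg _)
  have hAA'x : ∀ x : E, A (A' x) = x := fun x => by simpa using ContinuousLinearMap.ext_iff.mp hAA' x
  have hC' : ∀ x : E, ‖C₁ (A' x)‖ = ‖x‖ := by
    intro x; rw [hC, hAA'x]
  -- column identity
  have col : ∀ e : E, ‖C₁ e‖ ^ 2 + ‖C₂ e‖ ^ 2 = ‖e‖ ^ 2 := by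
    intro e
    have := key e 0 0
    simpa using this
  refine AddMonoidHomClass.isometry_of_norm U₁ ?_
  intro x
  have hx : x = mk2 x.fst x.snd := rfl
  rw [hx, hU₁]
  have sq : ‖mk2 (B₁ x.snd) (C₁ (A' x.fst) + D₁ x.snd)‖ ^ 2 = ‖mk2 x.fst x.snd‖ ^ 2 := by
    rw [nmk2, nmk2]
    have k := key (A' x.fst) x.snd 0
    simp only [map_zero, add_zero, norm_zero] at k
    have c := col (A' x.fst)
    rw [hC'] at c
    linarith [k, c]
  calc ‖mk2 (B₁ x.snd) (C₁ (A' x.fst) + D₁ x.snd)‖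
      = √(‖mk2 (B₁ x.snd) (C₁ (A' x.fst) + D₁ x.snd)‖ ^ 2) :=
        (Real.sqrt_sq (norm_nonneg _)).symm
    _ = √(‖mk2 x.fst x.snd‖ ^ 2) := by rw [sq]
    _ = ‖mk2 x.fst x.snd‖ := Real.sqrt_sq (norm_nonneg _)
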